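/- For every z ∈ ℂ with z ≠ 1 and every u = (u₁, u₂) ∈ ℂ², one has |f(z)·u|² − |f(conj z)·conj(u)|² = −(4κ(a²+1)^{3/2} / |z−1|²) · Im(u₁ · conj(u₂)), where f(z)·u = f(z)₁u₁ + f(z)₂u₂ and conj(u) = (conj u₁, conj u₂). -/

import Mathlib

open Complex

/-- The row-vector-valued function
`f(z) = (√(a+i)·(i−a)/(z−1)) · (iκ, 1)` (principal branch of the square root). -/
noncomputable def fvec (a κ : ℝ) (z : ℂ) : Fin 2 → ℂ :=
  (((a : ℂ) + I) ^ ((1 : ℂ) / 2) * (I - (a : ℂ)) / (z - 1)) • ![I * (κ : ℂ), 1]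

/-- With `a = √(α₁/β_ℓ)` and `κ = √(α₁ β_ℓ)`, for every `z ≠ 1` and `u ∈ ℂ²`:
`|f(z)·u|² − |f(z̄)·ū|² = −(4κ(a²+1)^{3/2}/|z−1|²)·Im(u₁ū₂)`. -/
theorem stmt9 (α₁ βℓ : ℝ) (hα : 0 < α₁) (hβ : 0 < βℓ)
    (a κ : ℝ) (ha : a = Real.sqrt (α₁ / βℓ)) (hκ : κ = Real.sqrt (α₁ * βℓ))
    (z : ℂ) (hz : z ≠ 1) (u : Fin 2 → ℂ) :
    ‖fvec a κ z 0 * u 0 + fvec a κ z 1 * u 1‖ ^ 2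
      - ‖fvec a κ ((starRingEnd ℂ) z) 0 * (starRingEnd ℂ) (u 0)
          + fvec a κ ((starRingEnd ℂ) z) 1 * (starRingEnd ℂ) (u 1)‖ ^ 2
    = -(4 * κ * (a ^ 2 + 1) ^ ((3 : ℝ) / 2) / ‖z - 1‖ ^ 2)
        * (u 0 * (starRingEnd ℂ) (u 1)).im := by
  have hz1 : z - 1 ≠ 0 := sub_ne_zero.mpr hz
  have haI : (a : ℂ) + I ≠ 0 := by
    intro h
    have := congrArg Complex.im h
    simp at this
  set s : ℂ := ((a : ℂ) + I) ^ ((1 : ℂ) / 2) with hs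
  have habs : ‖(a : ℂ) + I‖ = Real.sqrt (a ^ 2 + 1) := by
    rw [Complex.norm_def]
    congr 1
    simp [Complex.normSq_apply]
    ring
  have hpos : (0 : ℝ) < a ^ 2 + 1 := by positivity
  have hnss : Complex.normSq s = Real.sqrt (a ^ 2 + 1) := by
    rw [← Complex.sq_norm, hs, show ((1:ℂ)/2) = (((1:ℝ)/2 : ℝ) : ℂ) by norm_num,
      Complex.norm_cpow_real]
    rw [← Real.rpow_natCast (‖(a:ℂ)+I‖ ^ ((1:ℝ)/2)) 2,
      ← Real.rpow_mul (norm_nonneg _)]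
    norm_num [habs]
  have hnsIa : Complex.normSq (I - (a : ℂ)) = a ^ 2 + 1 := by
    simp [Complex.normSq_apply]; ring
  have hrpow : (a ^ 2 + 1) ^ ((3 : ℝ) / 2)
      = Real.sqrt (a ^ 2 + 1) * (a ^ 2 + 1) := by
    rw [show (3 : ℝ) / 2 = 1 / 2 + 1 by norm_num, Real.rpow_add hpos,
      Real.rpow_one, ← Real.sqrt_eq_rpow]
  have hN : Complex.normSq ((starRingEnd ℂ) z - 1) = Complex.normSq (z - 1) := by
    rw [show (starRingEnd ℂ) z - 1 = (starRingEnd ℂ) (z - 1) by simp, Complex.normSq_conj]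
  have hNpos : (0 : ℝ) < Complex.normSq (z - 1) := Complex.normSq_pos.mpr hz1
  have e1 : fvec a κ z 0 * u 0 + fvec a κ z 1 * u 1
      = (s * (I - (a : ℂ)) / (z - 1)) * (I * (κ : ℂ) * u 0 + u 1) := by
    simp [fvec, smul_eq_mul, hs]; ring
  have e2 : fvec a κ ((starRingEnd ℂ) z) 0 * (starRingEnd ℂ) (u 0)
        + fvec a κ ((starRingEnd ℂ) z) 1 * (starRingEnd ℂ) (u 1)
      = (s * (I - (a : ℂ)) / ((starRingEnd ℂ) z - 1))
        * (I * (κ : ℂ) * (starRingEnd ℂ) (u 0) + (starRingEnd ℂ) (u 1)) := by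
    simp [fvec, smul_eq_mul, hs]; ring
  rw [e1, e2, Complex.sq_norm, Complex.sq_norm, Complex.sq_norm]
  simp only [Complex.normSq_mul, Complex.normSq_div]
  rw [hN, hnss, hnsIa, hrpow]
  have hW : Complex.normSq (I * (κ : ℂ) * u 0 + u 1)
      - Complex.normSq (I * (κ : ℂ) * (starRingEnd ℂ) (u 0) + (starRingEnd ℂ) (u 1))
      = -(4 * κ) * (u 0 * (starRingEnd ℂ) (u 1)).im := by
    simp [Complex.normSq_apply, Complex.mul_im, Complex.mul_re, Complex.add_im,
      Complex.add_re]
    ring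
  linear_combination (Real.sqrt (a ^ 2 + 1) * (a ^ 2 + 1) / Complex.normSq (z - 1)) * hW
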